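/- arXiv:1810.11899 — 3 statements merged into one kernel-verified Lean document; each statement's English description precedes it below -/
import Mathlib

section
/- Fix reals η > 1, d > 0, and C > 0, and define for each positive integer p the cost T(p) = (C/(1-(1-1/η)^p) + (4 + 3/(η-1))·d·C/p). Let T(1) be this expression with p = 1, which simplifies to (η + d·(4 + 3/(η-1)))·C. Then for any ε > 0 and any positive integer p with p ≤ ε·d·(4 + 3/(η-1)) − η, the speedup T(1)/T(p) is at least p/(1+ε). -/
/-- Theorem 1: near-linear scalability of the parallel dashboard-based frontier
sampler. -/
theorem sampler_scalability (η d C ε : ℝ) (hη : 1 < η) (hd : 0 < d) (hC : 0 < C)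
    (hε : 0 < ε) (p : ℕ) (hp : 1 ≤ p)
    (hple : (p : ℝ) ≤ ε * d * (4 + 3 / (η - 1)) - η) :
    ((η + d * (4 + 3 / (η - 1))) * C) /
      (C / (1 - (1 - 1 / η) ^ p) + (4 + 3 / (η - 1)) * d * C / p)
        ≥ (p : ℝ) / (1 + ε) := by
  have hη0 : (0:ℝ) < η := lt_trans one_pos hη
  have hη1 : (0:ℝ) < η - 1 := sub_pos.mpr hη
  have h43 : (0:ℝ) < 4 + 3 / (η - 1) := by
    have := div_pos (by norm_num : (0:ℝ) < 3) hη1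
    linarith
  set K : ℝ := d * (4 + 3 / (η - 1)) with hK
  have hK0 : 0 < K := mul_pos hd h43
  have hp0 : (0:ℝ) < p := by exact_mod_cast hp
  set q : ℝ := 1 - 1 / η with hq
  have hq0 : 0 ≤ q := by
    have : 1 / η ≤ 1 := by rw [div_le_one hη0]; linarith
    simpa [hq] using sub_nonneg.mpr this
  have hinv : (0:ℝ) < 1 / η := by positivity
  have bern : 1 + (p:ℝ) * (1 / η) ≤ (1 + 1 / η) ^ p :=
    one_add_mul_le_pow (by linarith) p
  have hq_le : q ≤ 1 / (1 + 1 / η) := by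
    rw [le_div_iff₀ (by positivity)]
    have hmul : q * (1 + 1 / η) = 1 - (1 / η) ^ 2 := by
      rw [hq]; ring
    nlinarith [sq_nonneg (1 / η)]
  have hbernpos : (0:ℝ) < 1 + (p:ℝ) * (1 / η) := by positivity
  have hqp : q ^ p ≤ 1 / (1 + (p:ℝ) * (1 / η)) := by
    calc q ^ p ≤ (1 / (1 + 1 / η)) ^ p := pow_le_pow_left₀ hq0 hq_le p
      _ = 1 / (1 + 1 / η) ^ p := by rw [div_pow, one_pow]
      _ ≤ 1 / (1 + (p:ℝ) * (1 / η)) :=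
        one_div_le_one_div_of_le hbernpos bern
  have hηp : (0:ℝ) < η + p := by positivity
  have hqp' : q ^ p ≤ η / (η + p) := by
    have : 1 / (1 + (p:ℝ) * (1 / η)) = η / (η + p) := by
      field_simp
    linarith [this ▸ hqp]
  have h1q : (p:ℝ) / (η + p) ≤ 1 - q ^ p := by
    have : (p:ℝ) / (η + p) = 1 - η / (η + p) := by field_simp; ring
    rw [this]; linarith
  have h1qpos : (0:ℝ) < 1 - q ^ p := lt_of_lt_of_le (by positivity) h1q
  -- bound the denominator
  have hden1 : C / (1 - q ^ p) ≤ C * (η + p) / p := by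
    rw [div_le_div_iff₀ h1qpos hp0]
    have := mul_le_mul_of_nonneg_left h1q (le_of_lt hC)
    calc C * (p:ℝ) = C * ((p:ℝ) / (η + p)) * (η + p) := by
          field_simp
      _ ≤ C * (1 - q ^ p) * (η + p) := by
          apply mul_le_mul_of_nonneg_right _ (le_of_lt hηp)
          exact mul_le_mul_of_nonneg_left h1q (le_of_lt hC)
      _ = C * (η + p) * (1 - q ^ p) := by ring
  have hden2 : C / (1 - q ^ p) + (4 + 3 / (η - 1)) * d * C / p
      ≤ C * (η + p + K) / p := by
    have : (4 + 3 / (η - 1)) * d * C / p = K * C / p := by rw [hK]; ring_nf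
    rw [this]
    have hexp : C * (η + p + K) / p = C * (η + p) / p + K * C / p := by ring
    rw [hexp]
    linarith
  have hdenpos : 0 < C / (1 - q ^ p) + (4 + 3 / (η - 1)) * d * C / p := by
    have h1 : 0 < C / (1 - q ^ p) := div_pos hC h1qpos
    have h2 : 0 < (4 + 3 / (η - 1)) * d * C / p := by positivity
    linarith
  rw [ge_iff_le, div_le_div_iff₀ (by positivity) hdenpos]
  have hstep : (p:ℝ) * (C / (1 - q ^ p) + (4 + 3 / (η - 1)) * d * C / p)
      ≤ C * (η + p + K) := by
    calc (p:ℝ) * (C / (1 - q ^ p) + (4 + 3 / (η - 1)) * d * C / p)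
        ≤ (p:ℝ) * (C * (η + p + K) / p) :=
          mul_le_mul_of_nonneg_left hden2 (le_of_lt hp0)
      _ = C * (η + p + K) := by field_simp
  have hfinal : C * (η + p + K) ≤ (η + K) * C * (1 + ε) := by
    have hple' : (p:ℝ) ≤ ε * K - η := by
      rw [hK]; linarith [hple]
    have h1 : η + p + K ≤ (η + K) * (1 + ε) := by nlinarith
    calc C * (η + p + K) ≤ C * ((η + K) * (1 + ε)) :=
          mul_le_mul_of_nonneg_left h1 hC.le
      _ = (η + K) * C * (1 + ε) := by ring
  calc (p:ℝ) * (C / (1 - q ^ p) + (4 + 3 / (η - 1)) * d * C / p)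
      ≤ C * (η + p + K) := hstep
    _ ≤ (η + K) * C * (1 + ε) := hfinal
    _ = (η + d * (4 + 3 / (η - 1))) * C * (1 + ε) := by rw [hK]
end

section
/- Let n, d, f, S > 0 be reals and p a positive integer with p ≤ 4f/d and 2nd ≤ S. Define g(Q_v, Q_f) = 2·Q_f·n·d + 8·Q_v·n·f·γ(Q_v) for a function γ with 1/Q_v ≤ γ(Q_v) ≤ 1 and γ(1) = 1. Consider the feasible set F = {(Q_v, Q_f) ∈ ℤ⁺×ℤ⁺ : Q_v·Q_f ≥ p and 8nf·γ(Q_v)/Q_f ≤ S}. Then the point (1, Q_f*) with Q_f* = max{p, ⌈8nf/S⌉} is feasible and satisfies g(1, Q_f*) ≤ 2·inf over F of g. -/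
/-- Theorem 2: feature-only partitioning is a 2-approximation to the
communication minimization problem. -/
theorem two_approximation (n d f S : ℝ) (hn : 0 < n) (hd : 0 < d) (hf : 0 < f)
    (hS : 0 < S) (p : ℕ) (hp : 1 ≤ p)
    (hpf : (p : ℝ) ≤ 4 * f / d) (hcache : 2 * n * d ≤ S)
    (γ : ℕ → ℝ) (hγ : ∀ Qv : ℕ, 1 ≤ Qv → 1 / (Qv : ℝ) ≤ γ Qv ∧ γ Qv ≤ 1)
    (hγ1 : γ 1 = 1)
    (g : ℕ → ℕ → ℝ)
    (hg : ∀ Qv Qf : ℕ, g Qv Qf = 2 * (Qf : ℝ) * n * d + 8 * (Qv : ℝ) * n * f * γ Qv) :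
    (1 * max p ⌈8 * n * f / S⌉₊ ≥ p ∧
      8 * n * f * γ 1 / (max p ⌈8 * n * f / S⌉₊ : ℝ) ≤ S) ∧
    g 1 (max p ⌈8 * n * f / S⌉₊) ≤
      2 * sInf {y : ℝ | ∃ Qv Qf : ℕ, 1 ≤ Qv ∧ 1 ≤ Qf ∧ Qv * Qf ≥ p ∧
        8 * n * f * γ Qv / (Qf : ℝ) ≤ S ∧ y = g Qv Qf} := by
  set c : ℕ := ⌈8 * n * f / S⌉₊ with hc
  set m : ℕ := max p c with hmdef
  have hmp : p ≤ m := le_max_left _ _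
  have hm1 : 1 ≤ m := le_trans hp hmp
  have hmpos : (0 : ℝ) < (m : ℝ) := by exact_mod_cast hm1
  -- cache feasibility of (1, m)
  have hfeas2 : 8 * n * f * γ 1 / (m : ℝ) ≤ S := by
    rw [hγ1, mul_one, div_le_iff₀ hmpos]
    have h1 : 8 * n * f / S ≤ (c : ℝ) := Nat.le_ceil _
    have h2 : (c : ℝ) ≤ (m : ℝ) := by exact_mod_cast le_max_right p c
    have := (div_le_iff₀ hS).mp (h1.trans h2)
    linarith [this]
  have hfeas1 : 1 * m ≥ p := by simpa using hmp
  refine ⟨⟨hfeas1, by rw [hmdef, Nat.cast_max] at hfeas2; exact hfeas2⟩, ?_⟩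
  -- key bound : 2*m*n*d ≤ 8*n*f + 2*n*d
  have hpd : (p : ℝ) * d ≤ 4 * f := by
    have := (le_div_iff₀ hd).mp hpf
    linarith
  have hcbound : (c : ℝ) * S ≤ 8 * n * f + S := by
    have h1 : (c : ℝ) ≤ 8 * n * f / S + 1 :=
      (Nat.ceil_lt_add_one (by positivity)).le
    have h2 := mul_le_mul_of_nonneg_right h1 hS.le
    have h3 : (8 * n * f / S + 1) * S = 8 * n * f + S := by field_simp
    linarith [h2, h3.le]
  have hkey : 2 * (m : ℝ) * n * d ≤ 8 * n * f + 2 * n * d := by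
    rcases max_cases p c with ⟨hm, _⟩ | ⟨hm, _⟩ <;> rw [hmdef, hm]
    · nlinarith [mul_pos hn hd]
    · -- 2*c*n*d ≤ 8*n*f + 2*n*d, using c*S ≤ 8nf + S and 2nd ≤ S
      have hcnn : (0 : ℝ) ≤ (c : ℝ) := Nat.cast_nonneg _
      nlinarith [mul_le_mul_of_nonneg_right hcbound (by positivity : (0:ℝ) ≤ 2 * n * d),
        mul_pos hn hf, mul_pos hn hd]
  set T : Set ℝ := {y : ℝ | ∃ Qv Qf : ℕ, 1 ≤ Qv ∧ 1 ≤ Qf ∧ Qv * Qf ≥ p ∧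
        8 * n * f * γ Qv / (Qf : ℝ) ≤ S ∧ y = g Qv Qf} with hT
  have hne : T.Nonempty := ⟨g 1 m, 1, m, le_refl 1, hm1, by simpa using hmp, by
    simpa using hfeas2, rfl⟩
  have hlow : g 1 m / 2 ≤ sInf T := by
    apply le_csInf hne
    rintro y ⟨Qv, Qf, hQv, hQf, hprod, hcach, rfl⟩
    have hQvpos : (0 : ℝ) < (Qv : ℝ) := by exact_mod_cast hQv
    have hQfR : (1 : ℝ) ≤ (Qf : ℝ) := by exact_mod_cast hQf
    have hγv := hγ Qv hQv
    have hQvγ : 1 ≤ (Qv : ℝ) * γ Qv := by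
      have := (div_le_iff₀ hQvpos).mp hγv.1
      linarith
    rw [hg, hg, hγ1]
    push_cast
    nlinarith [mul_nonneg (by positivity : (0:ℝ) ≤ n * f) (sub_nonneg.mpr hQvγ),
      mul_nonneg (mul_pos hn hd).le (sub_nonneg.mpr hQfR), hkey]
  have hInf : sInf T ≥ g 1 m / 2 := hlow
  linarith
end

section
/- Let η > 1, d ≥ 1 be reals with ε = 1/2 and suppose η = 3. Then for every positive integer p with p ≤ 2.25·d − 3, the sampler speedup T(1)/T(p) with T(p) = 1/(1-(2/3)^p) + (11/2)·d/p and T(1) = 3 + (11/2)·d satisfies T(1)/T(p) ≥ (2/3)·p. -/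
/-- Auxiliary: `9 * 2^(m+2) ≤ 4 * 3^(m+2)`. -/
lemma aux_pow (m : ℕ) : 9 * 2 ^ (m + 2) ≤ 4 * 3 ^ (m + 2) := by
  induction m with
  | zero => norm_num
  | succ k ih =>
    have h2 : (2:ℕ) ^ (k + 1 + 2) = 2 * 2 ^ (k + 2) := by ring
    have h3 : (3:ℕ) ^ (k + 1 + 2) = 3 * 3 ^ (k + 2) := by ring
    omega

/-- `9 n 2^n ≤ 8 · 3^n` for `n ≥ 1`. -/
lemma nat_bound : ∀ n : ℕ, 1 ≤ n → 9 * n * 2 ^ n ≤ 8 * 3 ^ n := by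
  intro n hn
  induction n with
  | zero => omega
  | succ m ih =>
    rcases Nat.lt_or_ge m 2 with h | h
    · interval_cases m <;> norm_num
    · have ihm := ih (by omega)
      have haux := aux_pow (m - 2)
      have hm2 : m - 2 + 2 = m := by omega
      rw [hm2] at haux
      have e1 : 9 * (m + 1) * 2 ^ (m + 1) = 2 * (9 * m * 2 ^ m) + 2 * (9 * 2 ^ m) := by ring
      have e2 : 8 * 3 ^ (m + 1) = 2 * (8 * 3 ^ m) + 8 * 3 ^ m := by ring
      have : 2 * (9 * 2 ^ m) ≤ 8 * 3 ^ m := by omega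
      omega

/-- Specialization of the sampler scalability theorem with η = 3 and ε = 1/2. -/
theorem sampler_scalability_special (d : ℝ) (hd : 1 ≤ d) (p : ℕ) (hp : 1 ≤ p)
    (hple : (p : ℝ) ≤ 2.25 * d - 3) :
    (3 + (11 / 2) * d) / (1 / (1 - (2 / 3 : ℝ) ^ p) + (11 / 2) * d / p)
      ≥ (2 / 3) * p := by
  have hp0 : (0:ℝ) < p := by exact_mod_cast hp
  set q : ℝ := (2/3:ℝ) ^ p with hqdef
  have hq0 : 0 < q := by positivity
  have hq23 : q ≤ 2/3 := by
    calc q ≤ (2/3:ℝ) ^ 1 := pow_le_pow_of_le_one (by norm_num) (by norm_num) hp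
    _ = 2/3 := pow_one _
  have hpq : (p:ℝ) * q ≤ 8/9 := by
    have h' : (9 * p * 2 ^ p : ℝ) ≤ 8 * 3 ^ p := by exact_mod_cast nat_bound p hp
    have h3 : (0:ℝ) < 3 ^ p := by positivity
    have hq' : q = 2 ^ p / 3 ^ p := by rw [hqdef, div_pow]
    rw [hq', mul_div_assoc'] at *
    rw [div_le_div_iff₀ h3 (by norm_num : (0:ℝ) < 9)]
    nlinarith
  have h1q : (1:ℝ)/3 ≤ 1 - q := by linarith
  have h1q0 : (0:ℝ) < 1 - q := by linarith
  have hA : 1/(1-q) ≤ 1 + 3*q := by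
    rw [div_le_iff₀ h1q0]
    nlinarith
  have hD : 0 < 1/(1-q) + (11/2) * d / p := by positivity
  rw [ge_iff_le, le_div_iff₀ hD]
  have key : (2/3) * (p:ℝ) * ((11/2) * d / p) = (11/3) * d := by
    field_simp
  have h1 : (2/3) * (p:ℝ) * (1/(1-q)) ≤ (2/3) * p + 2 * (p * q) := by
    have := mul_le_mul_of_nonneg_left hA (by positivity : (0:ℝ) ≤ (2/3) * p)
    nlinarith
  have hple' : (2/3) * (p:ℝ) ≤ 1.5 * d - 2 := by nlinarith
  have expand : (2/3) * (p:ℝ) * (1/(1-q) + (11/2) * d / p)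
      = (2/3) * p * (1/(1-q)) + (2/3) * p * ((11/2) * d / p) := by ring
  rw [expand, key]
  nlinarith
end
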